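/- Let F = {a₁, …, a_N} be a family of lines in general position with equations y = mᵢx + cᵢ and m₁ < m₂ < ⋯ < m_N. If every triple aᵢ, aⱼ, a_k with i < j < k satisfies that the intersection of aᵢ and a_k lies strictly below aⱼ (i.e., every triple forms a cup in the dual sense described), then all N lines are in convex position: they define an unbounded N-cell. -/

import Mathlib

open Set

/-- A non-vertical line in the plane represented by (slope, intercept). -/
def lineSet (l : ℝ × ℝ) : Set (ℝ × ℝ) := {p | p.2 = l.1 * p.1 + l.2}

/-- General position: pairwise distinct slopes (hence no two parallel, none vertical
by the representation) and no three concurrent. -/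
def GenPos (F : Finset (ℝ × ℝ)) : Prop :=
  (∀ l₁ ∈ F, ∀ l₂ ∈ F, l₁ ≠ l₂ → l₁.1 ≠ l₂.1) ∧
  (∀ l₁ ∈ F, ∀ l₂ ∈ F, ∀ l₃ ∈ F, l₁ ≠ l₂ → l₁ ≠ l₃ → l₂ ≠ l₃ →
    ¬ ∃ p, p ∈ lineSet l₁ ∧ p ∈ lineSet l₂ ∧ p ∈ lineSet l₃)

/-- Intersection point of two non-parallel lines. -/
noncomputable def interPt (l₁ l₂ : ℝ × ℝ) : ℝ × ℝ :=
  ((l₂.2 - l₁.2) / (l₁.1 - l₂.1),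
   l₁.1 * ((l₂.2 - l₁.2) / (l₁.1 - l₂.1)) + l₁.2)

/-- The point `p` lies strictly below the line `l` (the line is strictly above `p`). -/
def Below (p : ℝ × ℝ) (l : ℝ × ℝ) : Prop := p.2 < l.1 * p.1 + l.2

/-- The point `p` lies strictly above the line `l` (the line is strictly below `p`). -/
def Above (p : ℝ × ℝ) (l : ℝ × ℝ) : Prop := p.2 > l.1 * p.1 + l.2

/-- A sequence of lines ordered by strictly increasing slope forms a cup: each
intermediate line lies strictly above the intersection of its two neighbours. -/
def IsCup {k : ℕ} (a : Fin k → ℝ × ℝ) : Prop :=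
  StrictMono (fun i => (a i).1) ∧
  ∀ i : Fin k, ∀ _h1 : 0 < (i : ℕ), ∀ h2 : (i : ℕ) + 1 < k,
    Below (interPt (a ⟨(i : ℕ) - 1, by omega⟩) (a ⟨(i : ℕ) + 1, h2⟩)) (a i)

/-- A sequence of lines ordered by strictly increasing slope forms a cap: each
intermediate line lies strictly below the intersection of its two neighbours. -/
def IsCap {k : ℕ} (a : Fin k → ℝ × ℝ) : Prop :=
  StrictMono (fun i => (a i).1) ∧
  ∀ i : Fin k, ∀ _h1 : 0 < (i : ℕ), ∀ h2 : (i : ℕ) + 1 < k,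
    Above (interPt (a ⟨(i : ℕ) - 1, by omega⟩) (a ⟨(i : ℕ) + 1, h2⟩)) (a i)

/-- `F` contains `k` lines forming a `k`-cup. -/
def HasCup (k : ℕ) (F : Finset (ℝ × ℝ)) : Prop :=
  ∃ a : Fin k → ℝ × ℝ, (∀ i, a i ∈ F) ∧ IsCup a

/-- `F` contains `l` lines forming an `l`-cap. -/
def HasCap (l : ℕ) (F : Finset (ℝ × ℝ)) : Prop :=
  ∃ a : Fin l → ℝ × ℝ, (∀ i, a i ∈ F) ∧ IsCap a

/-- Union of the lines of a family. -/
def linesUnion (F : Finset (ℝ × ℝ)) : Set (ℝ × ℝ) := ⋃ l ∈ F, lineSet l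

/-- `P` is a cell of the arrangement of `F`: a connected component of the
complement of the union of the lines. -/
def IsCellOf (F : Finset (ℝ × ℝ)) (P : Set (ℝ × ℝ)) : Prop :=
  ∃ p ∈ (linesUnion F)ᶜ, P = connectedComponentIn (linesUnion F)ᶜ p

/-- The line `l` contributes a (positive length) segment to the boundary of `P`:
the closure of `P` meets `l` in more than one point. -/
def Contributes (l : ℝ × ℝ) (P : Set (ℝ × ℝ)) : Prop :=
  ∃ p q : ℝ × ℝ, p ≠ q ∧ p ∈ closure P ∩ lineSet l ∧ q ∈ closure P ∩ lineSet l

/-- `P` is a cell of the arrangement of `F` with a boundary segment on every line of `F`. -/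
def IsNCell (F : Finset (ℝ × ℝ)) (P : Set (ℝ × ℝ)) : Prop :=
  IsCellOf F P ∧ ∀ l ∈ F, Contributes l P

/-- The lines of `F` are in convex position: they define a cell bounded by all of them. -/
def ConvexPos (F : Finset (ℝ × ℝ)) : Prop := ∃ P, IsNCell F P
/-- The open region strictly above all lines of the family. -/
def upperRegion {N : ℕ} (a : Fin N → ℝ × ℝ) : Set (ℝ × ℝ) :=
  {p | ∀ i, (a i).1 * p.1 + (a i).2 < p.2}

lemma upperRegion_isOpen {N : ℕ} (a : Fin N → ℝ × ℝ) : IsOpen (upperRegion a) := by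
  have : upperRegion a = ⋂ i, {p : ℝ × ℝ | (a i).1 * p.1 + (a i).2 < p.2} := by
    ext p; simp [upperRegion, Set.mem_iInter]
  rw [this]
  exact isOpen_iInter_of_finite fun i => isOpen_lt (by continuity) continuous_snd

lemma upperRegion_convex {N : ℕ} (a : Fin N → ℝ × ℝ) : Convex ℝ (upperRegion a) := by
  intro p hp q hq s t hs ht hst
  intro i
  have h1 := hp i
  have h2 := hq i
  simp only [Prod.fst_add, Prod.snd_add, Prod.smul_fst, Prod.smul_snd, smul_eq_mul]
  rcases eq_or_lt_of_le hs with hs0 | hs0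
  · have ht1 : t = 1 := by linarith
    rw [← hs0, ht1]; ring_nf; linarith
  · have e1 := mul_lt_mul_of_pos_left h1 hs0
    have e2 := mul_le_mul_of_nonneg_left h2.le ht
    have hc : (s + t) * (a i).2 = (a i).2 := by rw [hst, one_mul]
    nlinarith [e1, e2, hc]

lemma upperRegion_subset {N : ℕ} (a : Fin N → ℝ × ℝ) :
    upperRegion a ⊆ (linesUnion (Finset.univ.image a))ᶜ := by
  intro p hp hmem
  simp only [linesUnion, Set.mem_iUnion] at hmem
  obtain ⟨l, hl, hpl⟩ := hmem
  simp only [Finset.mem_coe, Finset.mem_image, Finset.mem_univ, true_and] at hl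
  obtain ⟨i, rfl⟩ := hl
  have := hp i
  simp only [lineSet, Set.mem_setOf_eq] at hpl
  linarith

lemma upperRegion_component {N : ℕ} (a : Fin N → ℝ × ℝ) {p : ℝ × ℝ}
    (hp : p ∈ upperRegion a) :
    connectedComponentIn (linesUnion (Finset.univ.image a))ᶜ p = upperRegion a := by
  apply le_antisymm
  · intro q hq
    by_contra hqU
    simp only [upperRegion, Set.mem_setOf_eq, not_forall, not_lt] at hqU
    obtain ⟨i, hi⟩ := hqU
    have hqc : q ∈ (linesUnion (Finset.univ.image a))ᶜ := connectedComponentIn_subset _ _ hq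
    have hqne : q.2 ≠ (a i).1 * q.1 + (a i).2 := by
      intro h
      apply hqc
      simp only [linesUnion, Set.mem_iUnion]
      exact ⟨a i, by simp, by simpa [lineSet] using h⟩
    have hqlt : q.2 < (a i).1 * q.1 + (a i).2 := lt_of_le_of_ne hi hqne
    set g : ℝ × ℝ → ℝ := fun r => r.2 - ((a i).1 * r.1 + (a i).2) with hg
    have hgc : ContinuousOn g (connectedComponentIn (linesUnion (Finset.univ.image a))ᶜ p) := by
      apply Continuous.continuousOn; continuity
    have hpmem : p ∈ connectedComponentIn (linesUnion (Finset.univ.image a))ᶜ p :=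
      mem_connectedComponentIn (upperRegion_subset a hp)
    have hppos : (0:ℝ) < p.2 - ((a i).1 * p.1 + (a i).2) := by
      have := hp i; linarith
    have h0 : (0:ℝ) ∈ Set.Icc (g q) (g p) := ⟨by simp [hg]; linarith, by simp [hg]; linarith⟩
    obtain ⟨r, hr, hgr⟩ :=
      (isPreconnected_connectedComponentIn.intermediate_value hq hpmem hgc) h0
    have hrc : r ∈ (linesUnion (Finset.univ.image a))ᶜ := connectedComponentIn_subset _ _ hr
    apply hrc
    simp only [linesUnion, Set.mem_iUnion]
    refine ⟨a i, by simp, ?_⟩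
    simp only [lineSet, Set.mem_setOf_eq]
    simp only [hg] at hgr
    linarith
  · exact (upperRegion_convex a).isPreconnected.subset_connectedComponentIn hp
      (upperRegion_subset a)

lemma upperRegion_contrib {N : ℕ} (a : Fin N → ℝ × ℝ)
    (hmono : StrictMono fun i => (a i).1)
    (hred : ∀ i j k : Fin N, i < j → j < k → Below (interPt (a i) (a k)) (a j))
    (i : Fin N) : Contributes (a i) (upperRegion a) := by
  classical
  have hslope : ∀ {j k : Fin N}, j < k → (a j).1 < (a k).1 := fun h => hmono h
  set xs : Fin N → ℝ := fun j => ((a j).2 - (a i).2) / ((a i).1 - (a j).1) with hxs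
  have hlt : ∀ j : Fin N, j < i → ∀ x : ℝ, xs j < x →
      (a j).1 * x + (a j).2 < (a i).1 * x + (a i).2 := by
    intro j hj x hx
    have hd : (0:ℝ) < (a i).1 - (a j).1 := by have := hslope hj; linarith
    rw [hxs] at hx
    rw [div_lt_iff₀ hd] at hx
    nlinarith
  have hgt : ∀ k : Fin N, i < k → ∀ x : ℝ, x < xs k →
      (a k).1 * x + (a k).2 < (a i).1 * x + (a i).2 := by
    intro k hk x hx
    have hd : (0:ℝ) < (a k).1 - (a i).1 := by have := hslope hk; linarith
    rw [hxs] at hx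
    rw [lt_div_iff_of_neg (by linarith : (a i).1 - (a k).1 < 0)] at hx
    nlinarith
  have hkey : ∀ j k : Fin N, j < i → i < k → xs j < xs k := by
    intro j k hj hk
    have hb := hred j i k hj hk
    simp only [Below, interPt] at hb
    set X : ℝ := ((a k).2 - (a j).2) / ((a j).1 - (a k).1) with hX
    have hjk : (a j).1 < (a k).1 := hslope (hj.trans hk)
    have hji : (a j).1 < (a i).1 := hslope hj
    have hik : (a i).1 < (a k).1 := hslope hk
    have hXline : (a j).1 * X + (a j).2 = (a k).1 * X + (a k).2 := by
      have hd : (a j).1 - (a k).1 ≠ 0 := by linarith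
      have h := div_mul_cancel₀ ((a k).2 - (a j).2) hd
      rw [← hX] at h
      linear_combination h
    have h1 : xs j < X := by
      rw [hxs, div_lt_iff₀ (by linarith : (0:ℝ) < (a i).1 - (a j).1)]
      nlinarith
    have h2 : X < xs k := by
      rw [hxs, lt_div_iff_of_neg (by linarith : (a i).1 - (a k).1 < 0)]
      nlinarith
    linarith
  have hDpt : ∃ x₁ x₂ : ℝ, x₁ ≠ x₂ ∧
      (∀ j, j < i → xs j < x₁) ∧ (∀ k, i < k → x₁ < xs k) ∧
      (∀ j, j < i → xs j < x₂) ∧ (∀ k, i < k → x₂ < xs k) := by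
    set T₁ := Finset.univ.filter (fun j : Fin N => j < i) with hT₁
    set T₂ := Finset.univ.filter (fun k : Fin N => i < k) with hT₂
    by_cases h1 : T₁.Nonempty <;> by_cases h2 : T₂.Nonempty
    · obtain ⟨j₀, hj₀, hLe⟩ := Finset.exists_mem_eq_sup' h1 xs
      obtain ⟨k₀, hk₀, hRe⟩ := Finset.exists_mem_eq_inf' h2 xs
      simp only [hT₁, Finset.mem_filter] at hj₀
      simp only [hT₂, Finset.mem_filter] at hk₀
      have hLR : xs j₀ < xs k₀ := hkey j₀ k₀ hj₀.2 hk₀.2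
      have hLx : ∀ j, j < i → xs j ≤ xs j₀ :=
        fun j hj => hLe ▸ Finset.le_sup' xs (by simp [hT₁, hj])
      have hRx : ∀ k, i < k → xs k₀ ≤ xs k :=
        fun k hk => hRe ▸ Finset.inf'_le xs (by simp [hT₂, hk])
      refine ⟨(2*(xs j₀)+(xs k₀))/3, ((xs j₀)+2*(xs k₀))/3,
        by intro h; rw [div_eq_div_iff (by norm_num) (by norm_num)] at h; linarith,
        ?_, ?_, ?_, ?_⟩
      · intro j hj; have := hLx j hj; linarith
      · intro k hk; have := hRx k hk; linarith
      · intro j hj; have := hLx j hj; linarith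
      · intro k hk; have := hRx k hk; linarith
    · obtain ⟨j₀, hj₀, hLe⟩ := Finset.exists_mem_eq_sup' h1 xs
      have hLx : ∀ j, j < i → xs j ≤ xs j₀ :=
        fun j hj => hLe ▸ Finset.le_sup' xs (by simp [hT₁, hj])
      have hno : ∀ k : Fin N, ¬ i < k := by
        intro k hk; exact h2 ⟨k, by simp [hT₂, hk]⟩
      refine ⟨xs j₀ + 1, xs j₀ + 2, by intro h; linarith, ?_, ?_, ?_, ?_⟩
      · intro j hj; have := hLx j hj; linarith
      · intro k hk; exact absurd hk (hno k)
      · intro j hj; have := hLx j hj; linarith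
      · intro k hk; exact absurd hk (hno k)
    · obtain ⟨k₀, hk₀, hRe⟩ := Finset.exists_mem_eq_inf' h2 xs
      have hRx : ∀ k, i < k → xs k₀ ≤ xs k :=
        fun k hk => hRe ▸ Finset.inf'_le xs (by simp [hT₂, hk])
      have hno : ∀ j : Fin N, ¬ j < i := by
        intro j hj; exact h1 ⟨j, by simp [hT₁, hj]⟩
      refine ⟨xs k₀ - 2, xs k₀ - 1, by intro h; linarith, ?_, ?_, ?_, ?_⟩
      · intro j hj; exact absurd hj (hno j)
      · intro k hk; have := hRx k hk; linarith
      · intro j hj; exact absurd hj (hno j)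
      · intro k hk; have := hRx k hk; linarith
    · have hno1 : ∀ j : Fin N, ¬ j < i := by
        intro j hj; exact h1 ⟨j, by simp [hT₁, hj]⟩
      have hno2 : ∀ k : Fin N, ¬ i < k := by
        intro k hk; exact h2 ⟨k, by simp [hT₂, hk]⟩
      exact ⟨0, 1, by norm_num,
        fun j hj => absurd hj (hno1 j), fun k hk => absurd hk (hno2 k),
        fun j hj => absurd hj (hno1 j), fun k hk => absurd hk (hno2 k)⟩
  obtain ⟨x₁, x₂, hx12, h1l, h1r, h2l, h2r⟩ := hDpt
  have hclosure : ∀ x : ℝ, (∀ j, j < i → xs j < x) → (∀ k, i < k → x < xs k) →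
      (x, (a i).1 * x + (a i).2) ∈ closure (upperRegion a) := by
    intro x hxl hxr
    rw [Metric.mem_closure_iff]
    intro ε hε
    refine ⟨(x, (a i).1 * x + (a i).2 + ε/2), ?_, ?_⟩
    · intro j
      simp only []
      rcases lt_trichotomy j i with hj | hj | hj
      · have := hlt j hj x (hxl j hj); linarith
      · subst hj; linarith
      · have := hgt j hj x (hxr j hj); linarith
    · rw [Prod.dist_eq]
      simp only [dist_self, Real.dist_eq]
      have : |(a i).1 * x + (a i).2 - ((a i).1 * x + (a i).2 + ε/2)| = ε/2 := by
        rw [show (a i).1 * x + (a i).2 - ((a i).1 * x + (a i).2 + ε/2) = -(ε/2) by ring,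
            abs_neg, abs_of_pos (by linarith)]
      rw [this]
      rw [max_lt_iff]
      constructor <;> linarith
  refine ⟨(x₁, (a i).1 * x₁ + (a i).2), (x₂, (a i).1 * x₂ + (a i).2), ?_, ?_, ?_⟩
  · intro h
    exact hx12 (congrArg Prod.fst h)
  · exact ⟨hclosure x₁ h1l h1r, by simp [lineSet]⟩
  · exact ⟨hclosure x₂ h2l h2r, by simp [lineSet]⟩

/-- If every triple (ordered by slope) has the intersection of its extreme lines
strictly below the middle line, then all N lines are in convex position, defining
an unbounded N-cell. -/
theorem stmt5 (N : ℕ) (a : Fin N → ℝ × ℝ) (hmono : StrictMono fun i => (a i).1)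
    (hgp : ∀ i j k : Fin N, i < j → j < k →
      ∀ p, ¬(p ∈ lineSet (a i) ∧ p ∈ lineSet (a j) ∧ p ∈ lineSet (a k)))
    (hred : ∀ i j k : Fin N, i < j → j < k → Below (interPt (a i) (a k)) (a j)) :
    ∃ P, IsNCell (Finset.univ.image a) P ∧ ¬ Bornology.IsBounded P := by
  classical
  rcases Nat.eq_zero_or_pos N with h0 | hN
  · subst h0
    have hF : (Finset.univ.image a : Finset (ℝ × ℝ)) = ∅ := by simp
    have hlu : linesUnion (Finset.univ.image a) = ∅ := by
      simp [linesUnion, hF]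
    refine ⟨Set.univ, ⟨⟨(0, 0), by simp [hlu, linesUnion], ?_⟩, ?_⟩, ?_⟩
    · rw [hlu]
      simp only [Set.compl_empty]
      rw [connectedComponentIn_univ]
      exact (PreconnectedSpace.connectedComponent_eq_univ _).symm
    · intro l hl
      simp [hF] at hl
    · intro hb
      rcases isBounded_iff_forall_norm_le.1 hb with ⟨C, hC⟩
      have := hC (0, |C| + 1) (Set.mem_univ _)
      have h2 : ‖((0 : ℝ), |C| + 1).2‖ ≤ ‖((0:ℝ), |C|+1)‖ := norm_snd_le _
      rw [Real.norm_eq_abs] at h2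
      have h3 : |(|C| + 1)| = |C| + 1 := abs_of_pos (by positivity)
      rw [h3] at h2
      have := abs_nonneg C
      have := le_abs_self C
      linarith
  · have hne : Finset.univ.Nonempty (α := Fin N) := ⟨⟨0, hN⟩, Finset.mem_univ _⟩
    set S : ℝ := Finset.univ.sup' hne (fun i => (a i).2) with hS
    have hp₀ : ((0 : ℝ), S + 1) ∈ upperRegion a := by
      intro i
      have : (a i).2 ≤ S := by
        rw [hS]; exact Finset.le_sup' (fun i => (a i).2) (Finset.mem_univ i)
      simp only []
      nlinarith
    refine ⟨upperRegion a,
      ⟨⟨((0:ℝ), S + 1), upperRegion_subset a hp₀, (upperRegion_component a hp₀).symm⟩, ?_⟩, ?_⟩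
    · intro l hl
      simp only [Finset.mem_image, Finset.mem_univ, true_and] at hl
      obtain ⟨i, rfl⟩ := hl
      exact upperRegion_contrib a hmono hred i
    · intro hb
      rcases isBounded_iff_forall_norm_le.1 hb with ⟨C, hC⟩
      set y : ℝ := S + |S| + |C| + 1 with hy
      have hyU : ((0:ℝ), y) ∈ upperRegion a := by
        intro i
        have : (a i).2 ≤ S := by
          rw [hS]; exact Finset.le_sup' (fun i => (a i).2) (Finset.mem_univ i)
        have := abs_nonneg S
        have := abs_nonneg C
        simp only []
        nlinarith
      have h1 := hC _ hyU
      have h2 : ‖((0:ℝ), y).2‖ ≤ ‖((0:ℝ), y)‖ := norm_snd_le _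
      rw [Real.norm_eq_abs] at h2
      have hy0 : 0 < y := by
        have := neg_abs_le S
        have := abs_nonneg C
        rw [hy]; linarith
      rw [abs_of_pos hy0] at h2
      have := le_abs_self C
      have := neg_abs_le S
      rw [hy] at h2
      linarith
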